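/- arXiv:2506.07111 — 4 statements merged into one kernel-verified Lean document; each statement's English description precedes it below -/
import Mathlib

section
/- In the setting of the extended ODE system with memory variables, if additionally v_k(0) = 0 for all k, then for all t ≥ 0 one has ⟨A u(t), u(t)⟩ + Σ_k a_k ‖v_k(t)‖² ≤ ⟨A u(0), u(0)⟩. -/
open scoped RealInnerProductSpace
open Filter Topology

/-- If a differentiable real function is midpoint convex, then its derivative is monotone. -/
theorem deriv_mono_of_midpoint_aux (Q Q' : ℝ → ℝ)
    (hQ : ∀ t, HasDerivAt Q (Q' t) t)
    (hmid : ∀ s t, Q ((s + t) / 2) ≤ (Q s + Q t) / 2) :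
    ∀ x y : ℝ, x ≤ y → Q' x ≤ Q' y := by
  have hseq : ∀ (d : ℝ), 0 < d → Tendsto (fun n : ℕ => d / 2 ^ n) atTop (𝓝 0) := by
    intro d hd
    have h2 : ∀ n : ℕ, d / 2 ^ n = d * (1/2 : ℝ) ^ n := by
      intro n; rw [div_pow, one_pow]; ring
    simp only [h2]
    simpa using (tendsto_pow_atTop_nhds_zero_of_lt_one (by norm_num) (by norm_num)
      : Tendsto (fun n : ℕ => (1/2 : ℝ) ^ n) atTop (𝓝 0)).const_mul d
  have hA : ∀ x d : ℝ, 0 < d → Q' x ≤ (Q (x + d) - Q x) / d := by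
    intro x d hd
    have key : ∀ h : ℝ, 0 < h →
        (Q (x + h / 2) - Q x) / (h / 2) ≤ (Q (x + h) - Q x) / h := by
      intro h hh
      have hm := hmid x (x + h)
      have hmm : (x + (x + h)) / 2 = x + h / 2 := by ring
      rw [hmm] at hm
      rw [div_le_div_iff₀ (by linarith) hh]
      nlinarith
    have hstep : ∀ n : ℕ, (Q (x + d / 2 ^ n) - Q x) / (d / 2 ^ n) ≤ (Q (x + d) - Q x) / d := by
      intro n; induction n with
      | zero => simp
      | succ n ih =>
        have h2 : d / 2 ^ (n + 1) = (d / 2 ^ n) / 2 := by ring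
        rw [h2]
        exact le_trans (key _ (by positivity)) ih
    have htends : Tendsto (fun n : ℕ => (Q (x + d / 2 ^ n) - Q x) / (d / 2 ^ n)) atTop
        (𝓝 (Q' x)) := by
      have hslope := hasDerivAt_iff_tendsto_slope.1 (hQ x)
      have hxs : Tendsto (fun n : ℕ => x + d / 2 ^ n) atTop (𝓝[≠] x) := by
        apply tendsto_nhdsWithin_of_tendsto_nhds_of_eventually_within
        · simpa using (tendsto_const_nhds (x := x)).add (hseq d hd)
        · filter_upwards with n
          have : (0:ℝ) < d / 2 ^ n := by positivity
          simp only [Set.mem_compl_iff, Set.mem_singleton_iff]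
          intro hcon
          nlinarith [hcon]
      have := hslope.comp hxs
      convert this using 2 with n
      simp [slope_def_field]
    exact le_of_tendsto htends (Eventually.of_forall hstep)
  have hB : ∀ y d : ℝ, 0 < d → (Q y - Q (y - d)) / d ≤ Q' y := by
    intro y d hd
    have key : ∀ h : ℝ, 0 < h →
        (Q y - Q (y - h)) / h ≤ (Q y - Q (y - h / 2)) / (h / 2) := by
      intro h hh
      have hm := hmid (y - h) y
      have hmm : (y - h + y) / 2 = y - h / 2 := by ring
      rw [hmm] at hm
      rw [div_le_div_iff₀ hh (by linarith)]
      nlinarith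
    have hstep : ∀ n : ℕ, (Q y - Q (y - d)) / d ≤ (Q y - Q (y - d / 2 ^ n)) / (d / 2 ^ n) := by
      intro n; induction n with
      | zero => simp
      | succ n ih =>
        have h2 : d / 2 ^ (n + 1) = (d / 2 ^ n) / 2 := by ring
        rw [h2]
        exact le_trans ih (key _ (by positivity))
    have htends : Tendsto (fun n : ℕ => (Q y - Q (y - d / 2 ^ n)) / (d / 2 ^ n)) atTop
        (𝓝 (Q' y)) := by
      have hslope := hasDerivAt_iff_tendsto_slope.1 (hQ y)
      have hxs : Tendsto (fun n : ℕ => y - d / 2 ^ n) atTop (𝓝[≠] y) := by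
        apply tendsto_nhdsWithin_of_tendsto_nhds_of_eventually_within
        · simpa using (tendsto_const_nhds (x := y)).sub (hseq d hd)
        · filter_upwards with n
          have : (0:ℝ) < d / 2 ^ n := by positivity
          simp only [Set.mem_compl_iff, Set.mem_singleton_iff]
          intro hcon
          nlinarith [hcon]
      have := hslope.comp hxs
      convert this using 2 with n
      simp only [Function.comp_apply, slope_def_field]
      rw [show y - d / 2 ^ n - y = -(d / 2 ^ n) by ring, div_neg, ← neg_div, neg_sub]
    exact ge_of_tendsto htends (Eventually.of_forall hstep)
  intro x y hxy
  rcases eq_or_lt_of_le hxy with rfl | hlt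
  · exact le_refl _
  · have hd : 0 < y - x := by linarith
    have h1 := hA x (y - x) hd
    have h2 := hB y (y - x) hd
    have e1 : x + (y - x) = y := by ring
    have e2 : y - (y - x) = x := by ring
    rw [e1] at h1; rw [e2] at h2
    linarith

theorem extended_system_a_priori_estimate
    {H : Type*} [NormedAddCommGroup H] [InnerProductSpace ℝ H]
    (A : H →ₗ[ℝ] H)
    (hAsym : ∀ x y : H, ⟪A x, y⟫ = ⟪x, A y⟫)
    (hApos : ∀ x : H, 0 ≤ ⟪A x, x⟫)
    (m : ℕ) (r : ℝ) (hr : 0 ≤ r)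
    (a lam : Fin m → ℝ) (ha : ∀ k, 0 < a k) (hlam : ∀ k, 0 < lam k)
    (u : ℝ → H) (v : Fin m → ℝ → H)
    (u' : ℝ → H) (v' : Fin m → ℝ → H)
    (hu : ∀ t, HasDerivAt u (u' t) t)
    (hv : ∀ k t, HasDerivAt (v k) (v' k t) t)
    (heq : ∀ t, (1 + r + ∑ k, a k / lam k) • u' t - ∑ k, (a k / lam k) • v' k t
        = -(A (u t)))
    (hveq : ∀ k t, v' k t + lam k • v k t = u' t)
    (hv0 : ∀ k, v k 0 = 0) :
    ∀ t ≥ (0:ℝ), ⟪A (u t), u t⟫ + ∑ k, a k * ‖v k t‖^2 ≤ ⟪A (u 0), u 0⟫ := by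
  have h1r : (0:ℝ) < 1 + r := by linarith
  have hvd : ∀ k t, v' k t = u' t - lam k • v k t := fun k t => eq_sub_of_add_eq (hveq k t)
  -- the reduced equation:  (1+r) u' + ∑ a v = -A u
  have hkey : ∀ t, (1 + r) • u' t + ∑ k, a k • v k t = -(A (u t)) := by
    intro t
    have hsum : ∑ k, (a k / lam k) • v' k t
        = (∑ k, a k / lam k) • u' t - ∑ k, a k • v k t := by
      rw [Finset.sum_smul, ← Finset.sum_sub_distrib]
      refine Finset.sum_congr rfl fun k _ => ?_
      rw [hvd k t, smul_sub, smul_smul, div_mul_cancel₀ _ (hlam k).ne']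
    have h := heq t
    rw [hsum, add_smul] at h
    rw [← h]; abel
  have hAu : ∀ t, A (u t) = -((1 + r) • u' t + ∑ k, a k • v k t) := by
    intro t; rw [hkey t, neg_neg]
  have hsub : ∀ t, (1 + r) • u' t = -(A (u t)) - ∑ k, a k • v k t :=
    fun t => eq_sub_of_add_eq (hkey t)
  -- derivative of u - v k
  have hUder : ∀ k t, HasDerivAt (fun τ => u τ - v k τ) (lam k • v k t) t := by
    intro k t
    have h := (hu t).sub (hv k t)
    rw [hvd k t] at h
    rw [sub_sub_cancel] at h
    exact h
  -- the quantity Q and its derivative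
  set Q : ℝ → ℝ := fun t => (1 + r) * ⟪u t, u t⟫
      + ∑ k, (a k / lam k) * ⟪u t - v k t, u t - v k t⟫ with hQdef
  set Qd : ℝ → ℝ := fun t => (1 + r) * (⟪u t, u' t⟫ + ⟪u' t, u t⟫)
      + ∑ k, (a k / lam k) *
        (⟪u t - v k t, lam k • v k t⟫ + ⟪lam k • v k t, u t - v k t⟫) with hQddef
  have hQder : ∀ t, HasDerivAt Q (Qd t) t := by
    intro t
    exact (((hu t).inner ℝ (hu t)).const_mul (1 + r)).add
      (HasDerivAt.fun_sum fun k _ => (((hUder k t).inner ℝ (hUder k t)).const_mul _))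
  -- expansions of (1+r) * inner with u'
  have e1 : ∀ σ τ : ℝ, (1 + r) * ⟪u' σ, u τ⟫
      = -⟪A (u σ), u τ⟫ - ∑ k, a k * ⟪v k σ, u τ⟫ := by
    intro σ τ
    rw [← real_inner_smul_left, hsub σ, inner_sub_left, inner_neg_left, sum_inner]
    simp [real_inner_smul_left]
  have e2 : ∀ σ τ : ℝ, (1 + r) * ⟪u σ, u' τ⟫
      = -⟪u σ, A (u τ)⟫ - ∑ k, a k * ⟪u σ, v k τ⟫ := by
    intro σ τ
    rw [← real_inner_smul_right, hsub τ, inner_sub_right, inner_neg_right, inner_sum]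
    simp [real_inner_smul_right]
  -- key algebraic cancellation
  have halg : ∀ σ τ : ℝ, (1 + r) * (⟪u σ, (-1 : ℝ) • u' τ⟫ + ⟪u' σ, u τ⟫)
      + ∑ k, (a k / lam k) *
        (⟪u σ - v k σ, (-1 : ℝ) • (lam k • v k τ)⟫ + ⟪lam k • v k σ, u τ - v k τ⟫) = 0 := by
    intro σ τ
    have hterm : ∀ k, (a k / lam k) *
        (⟪u σ - v k σ, (-1 : ℝ) • (lam k • v k τ)⟫ + ⟪lam k • v k σ, u τ - v k τ⟫)
        = a k * ⟪v k σ, u τ⟫ - a k * ⟪u σ, v k τ⟫ := by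
      intro k
      rw [neg_one_smul, inner_neg_right, real_inner_smul_right, real_inner_smul_left,
        inner_sub_left, inner_sub_right]
      field_simp [(hlam k).ne']
      ring
    rw [Finset.sum_congr rfl fun k _ => hterm k, Finset.sum_sub_distrib, neg_one_smul,
      inner_neg_right]
    have h1 := e1 σ τ
    have h2 := e2 σ τ
    have h3 := hAsym (u σ) (u τ)
    linear_combination h1 - h2 - h3
  -- the invariance identity: K s t = Q ((s+t)/2)
  have hZ : ∀ s t : ℝ, (1 + r) * ⟪u s, u t⟫
      + ∑ k, (a k / lam k) * ⟪u s - v k s, u t - v k t⟫ = Q ((s + t) / 2) := by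
    intro s t
    have hZder : ∀ σ : ℝ, HasDerivAt
        (fun σ => (1 + r) * ⟪u σ, u (s + t - σ)⟫
          + ∑ k, (a k / lam k) * ⟪u σ - v k σ, u (s + t - σ) - v k (s + t - σ)⟫) 0 σ := by
      intro σ
      have hc : HasDerivAt (fun τ : ℝ => s + t - τ) (-1) σ := by
        simpa using (hasDerivAt_id σ).const_sub (s + t)
      have hu2 : HasDerivAt (fun τ => u (s + t - τ)) ((-1 : ℝ) • u' (s + t - σ)) σ :=
        HasDerivAt.scomp σ (hu (s + t - σ)) hc
      have hU2 : ∀ k, HasDerivAt (fun τ => u (s + t - τ) - v k (s + t - τ))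
          ((-1 : ℝ) • (lam k • v k (s + t - σ))) σ :=
        fun k => HasDerivAt.scomp σ (hUder k (s + t - σ)) hc
      have hmain : HasDerivAt
          (fun σ => (1 + r) * ⟪u σ, u (s + t - σ)⟫
            + ∑ k, (a k / lam k) * ⟪u σ - v k σ, u (s + t - σ) - v k (s + t - σ)⟫)
          ((1 + r) * (⟪u σ, (-1 : ℝ) • u' (s + t - σ)⟫ + ⟪u' σ, u (s + t - σ)⟫)
            + ∑ k, (a k / lam k) * (⟪u σ - v k σ, (-1 : ℝ) • (lam k • v k (s + t - σ))⟫
              + ⟪lam k • v k σ, u (s + t - σ) - v k (s + t - σ)⟫)) σ :=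
        (((hu σ).inner ℝ hu2).const_mul (1 + r)).add
          (HasDerivAt.fun_sum fun k _ => (((hUder k σ).inner ℝ (hU2 k)).const_mul (a k / lam k)))
      convert hmain using 1
      exact (halg σ (s + t - σ)).symm
    have hcst := is_const_of_deriv_eq_zero
      (fun σ => (hZder σ).differentiableAt) (fun σ => (hZder σ).deriv) s ((s + t) / 2)
    simp only [show s + t - s = t by ring, show s + t - (s + t) / 2 = (s + t) / 2 by ring]
      at hcst
    exact hcst
  -- midpoint convexity of Q
  have hmidQ : ∀ s t : ℝ, Q ((s + t) / 2) ≤ (Q s + Q t) / 2 := by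
    intro s t
    rw [← hZ s t]
    have base : ∀ x y : H, ⟪x, y⟫ ≤ (⟪x, x⟫ + ⟪y, y⟫) / 2 := by
      intro x y
      have h := real_inner_self_nonneg (x := x - y)
      rw [inner_sub_sub_self] at h
      linarith [real_inner_comm x y]
    have hle : (1 + r) * ⟪u s, u t⟫ + ∑ k, (a k / lam k) * ⟪u s - v k s, u t - v k t⟫
        ≤ (1 + r) * ((⟪u s, u s⟫ + ⟪u t, u t⟫) / 2)
          + ∑ k, (a k / lam k) *
            ((⟪u s - v k s, u s - v k s⟫ + ⟪u t - v k t, u t - v k t⟫) / 2) :=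
      add_le_add (mul_le_mul_of_nonneg_left (base _ _) h1r.le)
        (Finset.sum_le_sum fun k _ => mul_le_mul_of_nonneg_left (base _ _)
          (div_nonneg (ha k).le (hlam k).le))
    refine le_trans hle (le_of_eq ?_)
    simp only [hQdef]
    rw [show (∑ k, (a k / lam k) *
          ((⟪u s - v k s, u s - v k s⟫ + ⟪u t - v k t, u t - v k t⟫) / 2))
        = ∑ k, ((a k / lam k) * ⟪u s - v k s, u s - v k s⟫ / 2
            + (a k / lam k) * ⟪u t - v k t, u t - v k t⟫ / 2) from
        Finset.sum_congr rfl fun k _ => by ring,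
      Finset.sum_add_distrib, ← Finset.sum_div, ← Finset.sum_div]
    ring
  -- monotonicity of Qd
  have hmono := deriv_mono_of_midpoint_aux Q Qd hQder hmidQ
  -- energy identity
  have hEt : ∀ t : ℝ, ⟪A (u t), u t⟫ + ∑ k, a k * ‖v k t‖^2 = -(Qd t) / 2 := by
    intro t
    have hAu2 : ⟪A (u t), u t⟫
        = -((1 + r) * ⟪u' t, u t⟫ + ∑ k, a k * ⟪v k t, u t⟫) := by
      rw [hAu t, inner_neg_left, inner_add_left, sum_inner, real_inner_smul_left]
      simp [real_inner_smul_left]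
    have hterm : ∀ k, (a k / lam k) *
        (⟪u t - v k t, lam k • v k t⟫ + ⟪lam k • v k t, u t - v k t⟫)
        = 2 * (a k * ⟪v k t, u t⟫) - 2 * (a k * ‖v k t‖^2) := by
      intro k
      rw [real_inner_smul_right, real_inner_smul_left, inner_sub_left, inner_sub_right,
        real_inner_self_eq_norm_sq, real_inner_comm (u t) (v k t)]
      field_simp [(hlam k).ne']
      ring
    have hQdt : Qd t = 2 * ((1 + r) * ⟪u' t, u t⟫)
        + (2 * ∑ k, a k * ⟪v k t, u t⟫ - 2 * ∑ k, a k * ‖v k t‖^2) := by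
      simp only [hQddef]
      rw [Finset.sum_congr rfl fun k _ => hterm k, Finset.sum_sub_distrib,
        ← Finset.mul_sum, ← Finset.mul_sum, real_inner_comm (u t) (u' t)]
      ring
    rw [hAu2, hQdt]
    ring
  clear_value Q Qd
  intro t ht
  have hm := hmono 0 t ht
  have h1 := hEt t
  have h0 := hEt 0
  simp only [hv0, norm_zero] at h0
  rw [h1]
  have h0' : ⟪A (u 0), u 0⟫ = -(Qd 0) / 2 := by
    simpa using h0
  rw [h0']
  linarith
end

section
/- Key identity in the energy proof: if u, v_1,...,v_m : ℝ → H are differentiable and satisfy the extended system, then (1+r)‖u'(t)‖² + (1/2) d/dt (⟨A u(t), u(t)⟩ + Σ_k a_k ‖v_k(t)‖²) + Σ_k (a_k/λ_k) ‖v_k'(t) - u'(t)‖² = 0 for all t. -/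
open scoped RealInnerProductSpace
open Filter Asymptotics Set


private lemma abs_le_abs_of_uIcc {h x : ℝ} (hx : x ∈ Set.uIcc (0:ℝ) h) : |x| ≤ |h| := by
  rcases le_total 0 h with h0 | h0
  · rw [Set.uIcc_of_le h0] at hx
    rw [abs_of_nonneg hx.1, abs_of_nonneg h0]; exact hx.2
  · rw [Set.uIcc_of_ge h0] at hx
    rw [abs_of_nonpos hx.2, abs_of_nonpos h0]; linarith [hx.1]

private lemma taylor2_littleO {F F' : ℝ → ℝ} {s c : ℝ}
    (hF : ∀ x, HasDerivAt F (F' x) x) (hF' : HasDerivAt F' c s) :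
    (fun h : ℝ => F (s + h) - F s - h * F' s - h ^ 2 * (c / 2)) =o[nhds 0] fun h : ℝ => h ^ 2 := by
  have hG : ∀ h : ℝ, HasDerivAt (fun h : ℝ => F (s + h) - F s - h * F' s - h ^ 2 * (c / 2))
      (F' (s + h) - F' s - h * c) h := by
    intro h
    have h1 : HasDerivAt (fun h : ℝ => F (s + h)) (F' (s + h)) h := by
      have := (hF (s + h)).comp h ((hasDerivAt_id h).const_add s)
      exact this.congr_deriv (mul_one _)
    have hq : HasDerivAt (fun h : ℝ => h ^ 2 * (c / 2)) (h * c) h := by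
      have := (hasDerivAt_pow 2 h).mul_const (c / 2)
      exact this.congr_deriv (by ring)
    have hl : HasDerivAt (fun h : ℝ => h * F' s) (F' s) h := by
      simpa using (hasDerivAt_id h).mul_const (F' s)
    have := ((h1.sub (hasDerivAt_const h (F s))).sub hl).sub hq
    exact this.congr_deriv (by ring)
  have hG'o : (fun h : ℝ => F' (s + h) - F' s - h * c) =o[nhds 0] fun h : ℝ => h := by
    have h0 := hasDerivAt_iff_isLittleO.mp hF'
    have ht : Filter.Tendsto (fun h : ℝ => s + h) (nhds 0) (nhds s) := by
      have : Filter.Tendsto (fun h : ℝ => s + h) (nhds 0) (nhds (s + 0)) :=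
        (continuous_const.add continuous_id).tendsto 0
      simpa using this
    have := h0.comp_tendsto ht
    simp only [Function.comp_def, add_sub_cancel_left] at this
    simpa [smul_eq_mul, mul_comm] using this
  rw [isLittleO_iff]
  intro ε hε
  have hb := (isLittleO_iff.mp hG'o) hε
  rcases Metric.eventually_nhds_iff.mp hb with ⟨δ, hδpos, hδ⟩
  have hev : ∀ᶠ h : ℝ in nhds 0, |h| < δ := by
    filter_upwards [Metric.ball_mem_nhds (0:ℝ) hδpos] with h hh
    simpa [Real.dist_eq] using hh
  filter_upwards [hev] with h hh
  have hbound : ∀ x ∈ Set.uIcc (0:ℝ) h, ‖F' (s + x) - F' s - x * c‖ ≤ ε * |h| := by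
    intro x hx
    have hxh : |x| ≤ |h| := abs_le_abs_of_uIcc hx
    have := hδ (y := x) (by simpa [Real.dist_eq] using lt_of_le_of_lt hxh hh)
    calc ‖F' (s + x) - F' s - x * c‖ ≤ ε * ‖x‖ := this
    _ ≤ ε * |h| := by rw [Real.norm_eq_abs]; exact mul_le_mul_of_nonneg_left hxh hε.le
  have hmvt := Convex.norm_image_sub_le_of_norm_hasDerivWithin_le
      (f := fun h : ℝ => F (s + h) - F s - h * F' s - h ^ 2 * (c / 2))
      (f' := fun x : ℝ => F' (s + x) - F' s - x * c) (s := Set.uIcc (0:ℝ) h) (C := ε * |h|)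
      (fun x _ => (hG x).hasDerivWithinAt) hbound (convex_uIcc 0 h)
      Set.left_mem_uIcc Set.right_mem_uIcc
  simp only [sub_zero] at hmvt
  calc ‖F (s + h) - F s - h * F' s - h ^ 2 * (c / 2)‖
      = ‖F (s + h) - F s - h * F' s - h ^ 2 * (c / 2) - (F (s + 0) - F s - 0 * F' s - 0 ^ 2 * (c / 2))‖ := by
        norm_num
    _ ≤ ε * |h| * ‖h‖ := hmvt
    _ = ε * ‖h ^ 2‖ := by rw [Real.norm_eq_abs, Real.norm_eq_abs, abs_pow]; ring

private lemma normsq_littleO {E : Type*} [NormedAddCommGroup E] [InnerProductSpace ℝ E]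
    {w : ℝ → E} {w' : E} {s : ℝ} (hw : HasDerivAt w w' s) :
    (fun h : ℝ => ‖w (s + h) - w s‖ ^ 2 - h ^ 2 * ‖w'‖ ^ 2) =o[nhds 0] fun h : ℝ => h ^ 2 := by
  have ht : Filter.Tendsto (fun h : ℝ => s + h) (nhds 0) (nhds s) := by
    have : Filter.Tendsto (fun h : ℝ => s + h) (nhds 0) (nhds (s + 0)) :=
      (continuous_const.add continuous_id).tendsto 0
    simpa using this
  have hE : (fun h : ℝ => w (s + h) - w s - h • w') =o[nhds 0] fun h : ℝ => h := by
    have h0 := hasDerivAt_iff_isLittleO.mp hw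
    have := h0.comp_tendsto ht
    simp only [Function.comp_def, add_sub_cancel_left] at this
    exact this
  have hS : (fun h : ℝ => w (s + h) - w s + h • w') =O[nhds 0] fun h : ℝ => h := by
    have h2 : (fun h : ℝ => (2 * h) • w') =O[nhds 0] fun h : ℝ => h := by
      apply isBigO_of_le' (c := 2 * ‖w'‖)
      intro h
      rw [norm_smul, Real.norm_eq_abs, Real.norm_eq_abs, abs_mul]
      rw [abs_of_nonneg (by norm_num : (0:ℝ) ≤ 2)]
      ring_nf
      nlinarith [abs_nonneg h, norm_nonneg w']
    have := hE.isBigO.add h2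
    have heq : (fun h : ℝ => w (s + h) - w s - h • w' + (2 * h) • w')
        = fun h : ℝ => w (s + h) - w s + h • w' := by
      funext h
      have : (2 * h) • w' = h • w' + h • w' := by
        rw [two_mul, add_smul]
      rw [this]; abel
    rwa [heq] at this
  have pol : ∀ X Y : E, ⟪X - Y, X + Y⟫ = ‖X‖ ^ 2 - ‖Y‖ ^ 2 := by
    intro X Y
    simp only [inner_sub_left, inner_add_right, real_inner_self_eq_norm_sq]
    rw [real_inner_comm Y X]
    ring
  have key : ∀ h : ℝ, ‖w (s + h) - w s‖ ^ 2 - h ^ 2 * ‖w'‖ ^ 2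
      = ⟪w (s + h) - w s - h • w', w (s + h) - w s + h • w'⟫ := by
    intro h
    rw [pol (w (s + h) - w s) (h • w'), norm_smul, Real.norm_eq_abs, mul_pow, sq_abs]
  have hbound : (fun h : ℝ => ‖w (s + h) - w s‖ ^ 2 - h ^ 2 * ‖w'‖ ^ 2)
      =O[nhds 0] fun h : ℝ => ‖w (s + h) - w s - h • w'‖ * ‖w (s + h) - w s + h • w'‖ := by
    apply isBigO_of_le
    intro h
    rw [key h, Real.norm_eq_abs, Real.norm_eq_abs,
      abs_of_nonneg (mul_nonneg (norm_nonneg _) (norm_nonneg _))]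
    exact abs_real_inner_le_norm _ _
  have hprod : (fun h : ℝ => ‖w (s + h) - w s - h • w'‖ * ‖w (s + h) - w s + h • w'‖)
      =o[nhds 0] fun h : ℝ => h * h := hE.norm_left.mul_isBigO hS.norm_left
  have := hbound.trans_isLittleO hprod
  have heq2 : (fun h : ℝ => h * h) = fun h : ℝ => h ^ 2 := by funext h; ring
  rwa [heq2] at this

private lemma convexOn_of_local_support {P L : ℝ → ℝ} (hP : Continuous P)
    (hloc : ∀ s : ℝ, ∀ ε : ℝ, 0 < ε →
      ∀ᶠ y in nhds s, P s + L s * (y - s) - ε * (y - s) ^ 2 ≤ P y) :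
    ConvexOn ℝ Set.univ P := by
  have key : ∀ ε : ℝ, 0 < ε → ∀ a b z : ℝ, a < b → z ∈ Set.Icc a b →
      P z + ε * z ^ 2 ≤ (P a + ε * a ^ 2) +
        ((P b + ε * b ^ 2 - (P a + ε * a ^ 2)) / (b - a)) * (z - a) := by
    intro ε hε a b z hab hz
    by_contra hcon
    push_neg at hcon
    set mm : ℝ := (P b + ε * b ^ 2 - (P a + ε * a ^ 2)) / (b - a) with hm
    set R : ℝ → ℝ := fun x => P x + ε * x ^ 2 - (P a + ε * a ^ 2 + mm * (x - a)) with hR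
    have hRcont : Continuous R := by
      apply Continuous.sub
      · exact hP.add (continuous_const.mul (continuous_pow 2))
      · exact continuous_const.add (continuous_const.mul (continuous_id.sub continuous_const))
    obtain ⟨ξ, hξI, hξmax⟩ := isCompact_Icc.exists_isMaxOn (Set.nonempty_Icc.mpr hab.le)
        hRcont.continuousOn
    have hRz : 0 < R z := by simp only [hR]; linarith
    have hRξ : 0 < R ξ := lt_of_lt_of_le hRz (hξmax hz)
    have hRa : R a = 0 := by simp [hR]
    have hba : b - a ≠ 0 := ne_of_gt (by linarith)
    have hRb : R b = 0 := by
      simp only [hR, hm]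
      field_simp
      ring
    have hξa : ξ ≠ a := by intro hh; rw [hh, hRa] at hRξ; exact lt_irrefl _ hRξ
    have hξb : ξ ≠ b := by intro hh; rw [hh, hRb] at hRξ; exact lt_irrefl _ hRξ
    have hξin : ξ ∈ Set.Ioo a b :=
      ⟨lt_of_le_of_ne hξI.1 (Ne.symm hξa), lt_of_le_of_ne hξI.2 hξb⟩
    have hev := hloc ξ (ε / 2) (by linarith)
    have hop : ∀ᶠ y in nhds ξ, y ∈ Set.Ioo a b := isOpen_Ioo.eventually_mem hξin
    rcases Metric.eventually_nhds_iff.mp (hev.and hop) with ⟨δ, hδpos, hδ⟩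
    have hkey : ∀ y : ℝ, dist y ξ < δ →
        (L ξ + 2 * ε * ξ - mm) * (y - ξ) + (ε / 2) * (y - ξ) ^ 2 ≤ 0 := by
      intro y hy
      obtain ⟨h1, h2⟩ := hδ hy
      have h3 : R y ≤ R ξ := hξmax (Set.Ioo_subset_Icc_self h2)
      simp only [hR] at h3
      nlinarith [h1]
    have hd0 : 0 < δ / 2 := by linarith
    have hp := hkey (ξ + δ / 2) (by
      rw [Real.dist_eq]
      rw [show ξ + δ / 2 - ξ = δ / 2 by ring, abs_of_pos hd0]; linarith)
    have hn := hkey (ξ - δ / 2) (by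
      rw [Real.dist_eq]
      rw [show ξ - δ / 2 - ξ = -(δ / 2) by ring, abs_neg, abs_of_pos hd0]; linarith)
    have e1 : ξ + δ / 2 - ξ = δ / 2 := by ring
    have e2 : ξ - δ / 2 - ξ = -(δ / 2) := by ring
    rw [e1] at hp
    rw [e2] at hn
    nlinarith [hp, hn, mul_pos hε (mul_pos hd0 hd0)]
  have chord : ∀ x y α β : ℝ, x < y → 0 ≤ α → 0 ≤ β → α + β = 1 →
      P (α * x + β * y) ≤ α * P x + β * P y := by
    intro x y α β hxy hα hβ hαβ
    have hα1 : α = 1 - β := by linarith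
    subst hα1
    have hβ1 : β ≤ 1 := by linarith
    have hz : (1 - β) * x + β * y ∈ Set.Icc x y := by
      constructor
      · nlinarith [mul_nonneg hβ (sub_nonneg.mpr hxy.le)]
      · nlinarith [mul_nonneg (by linarith : (0:ℝ) ≤ 1 - β) (sub_nonneg.mpr hxy.le)]
    have hyx : y - x ≠ 0 := ne_of_gt (by linarith)
    have hε : ∀ ε : ℝ, 0 < ε →
        P ((1 - β) * x + β * y) ≤ (1 - β) * P x + β * P y
          + ε * ((1 - β) * x ^ 2 + β * y ^ 2 - ((1 - β) * x + β * y) ^ 2) := by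
      intro ε hεp
      have hk := key ε hεp x y _ hxy hz
      have hchordval : (P x + ε * x ^ 2) +
          ((P y + ε * y ^ 2 - (P x + ε * x ^ 2)) / (y - x)) * (((1 - β) * x + β * y) - x)
          = (1 - β) * (P x + ε * x ^ 2) + β * (P y + ε * y ^ 2) := by
        field_simp
        ring
      rw [hchordval] at hk
      nlinarith [hk]
    have hid : (1 - β) * x ^ 2 + β * y ^ 2 - ((1 - β) * x + β * y) ^ 2
        = (1 - β) * β * (x - y) ^ 2 := by ring
    have hCnn : 0 ≤ (1 - β) * x ^ 2 + β * y ^ 2 - ((1 - β) * x + β * y) ^ 2 := by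
      rw [hid]
      have : (0:ℝ) ≤ 1 - β := by linarith
      positivity
    apply le_of_forall_pos_le_add
    intro δ hδ
    set C : ℝ := (1 - β) * x ^ 2 + β * y ^ 2 - ((1 - β) * x + β * y) ^ 2 with hC
    have h1 := hε (δ / (C + 1)) (div_pos hδ (by linarith))
    have h2 : δ / (C + 1) * C ≤ δ := by
      rw [div_mul_eq_mul_div, div_le_iff₀ (by linarith : (0:ℝ) < C + 1)]
      nlinarith
    linarith
  refine ⟨convex_univ, ?_⟩
  intro x _ y _ α β hα hβ hαβ
  simp only [smul_eq_mul]
  rcases lt_trichotomy x y with h | h | h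
  · exact chord x y α β h hα hβ hαβ
  · subst h
    have h1 : α * x + β * x = x := by rw [← add_mul, hαβ, one_mul]
    rw [h1]
    have h2 : α * P x + β * P x = P x := by rw [← add_mul, hαβ, one_mul]
    rw [h2]
  · have := chord y x β α h hβ hα (by linarith)
    calc P (α * x + β * y) = P (β * y + α * x) := by ring_nf
    _ ≤ β * P y + α * P x := this
    _ = α * P x + β * P y := by ring

set_option maxHeartbeats 1000000 in
private lemma second_deriv_of_convex_peano {P Pd : ℝ → ℝ} {t c : ℝ}
    (hP : ∀ x : ℝ, HasDerivAt P (Pd x) x) (hconv : ConvexOn ℝ Set.univ P) (hc : 0 ≤ c)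
    (hPeano : (fun h : ℝ => P (t + h) - P t - h * Pd t - c * h ^ 2) =o[nhds 0]
      fun h : ℝ => h ^ 2) :
    HasDerivAt Pd (2 * c) t := by
  set e : ℝ → ℝ := fun h => P (t + h) - P t - h * Pd t - c * h ^ 2 with he
  have hPval : ∀ h : ℝ, P (t + h) = P t + h * Pd t + c * h ^ 2 + e h := by
    intro h; simp only [he]; ring
  have key : ∀ ρ : ℝ, 0 < ρ → ∀ᶠ h : ℝ in nhds 0,
      |Pd (t + h) - Pd t - 2 * c * h| ≤ ρ * |h| := by
    intro ρ hρ
    set ε : ℝ := min 1 (ρ / (2 * (c + 1))) with hεdef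
    have hεpos : 0 < ε := lt_min one_pos (div_pos hρ (by linarith))
    have hε1 : ε ≤ 1 := min_le_left _ _
    have hcε : c * ε ≤ ρ / 2 := by
      have h1 : ε ≤ ρ / (2 * (c + 1)) := min_le_right _ _
      have h2 : c * ε ≤ (c + 1) * (ρ / (2 * (c + 1))) := by
        apply mul_le_mul (by linarith) h1 hεpos.le (by linarith)
      calc c * ε ≤ (c + 1) * (ρ / (2 * (c + 1))) := h2
        _ = ρ / 2 := by field_simp
    set η : ℝ := ρ * ε / 10 with hηdef
    have hηpos : 0 < η := by positivity
    have hbe := (isLittleO_iff.mp hPeano) hηpos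
    rcases Metric.eventually_nhds_iff.mp hbe with ⟨δ, hδpos, hδ⟩
    have hesmall : ∀ k : ℝ, |k| < δ → |e k| ≤ η * k ^ 2 := by
      intro k hk
      have := hδ (y := k) (by simpa [Real.dist_eq] using hk)
      rw [Real.norm_eq_abs, Real.norm_eq_abs, abs_pow, sq_abs] at this
      exact this
    have hev : ∀ᶠ h : ℝ in nhds 0, |h| < δ / 2 := by
      filter_upwards [Metric.ball_mem_nhds (0:ℝ) (by linarith : (0:ℝ) < δ / 2)] with h hh
      simpa [Real.dist_eq] using hh
    filter_upwards [hev] with h hh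
    rcases eq_or_ne h 0 with rfl | hne
    · simp
    have hhabs : 0 < |h| := abs_pos.mpr hne
    set k : ℝ := ε * |h| with hkdef
    have hkpos : 0 < k := mul_pos hεpos hhabs
    have hk_le : k ≤ |h| := by
      calc k = ε * |h| := rfl
        _ ≤ 1 * |h| := mul_le_mul_of_nonneg_right hε1 (abs_nonneg h)
        _ = |h| := one_mul _
    have hhδ : |h| < δ := by linarith
    have hhk1 : |h + k| < δ := by
      calc |h + k| ≤ |h| + |k| := abs_add_le _ _
        _ = |h| + k := by rw [abs_of_pos hkpos]
        _ ≤ 2 * |h| := by linarith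
        _ < δ := by linarith
    have hhk2 : |h - k| < δ := by
      calc |h - k| ≤ |h| + |k| := abs_sub _ _
        _ = |h| + k := by rw [abs_of_pos hkpos]
        _ ≤ 2 * |h| := by linarith
        _ < δ := by linarith
    have eb1 := hesmall (h + k) hhk1
    have eb2 := hesmall h hhδ
    have eb3 := hesmall (h - k) hhk2
    have hsq1 : (h + k) ^ 2 ≤ 4 * h ^ 2 := by
      have h1 : |h + k| ≤ 2 * |h| := by
        calc |h + k| ≤ |h| + |k| := abs_add_le _ _
          _ = |h| + k := by rw [abs_of_pos hkpos]
          _ ≤ 2 * |h| := by linarith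
      nlinarith [sq_abs (h + k), sq_abs h, abs_nonneg (h + k), abs_nonneg h]
    have hsq3 : (h - k) ^ 2 ≤ 4 * h ^ 2 := by
      have h1 : |h - k| ≤ 2 * |h| := by
        calc |h - k| ≤ |h| + |k| := abs_sub _ _
          _ = |h| + k := by rw [abs_of_pos hkpos]
          _ ≤ 2 * |h| := by linarith
      nlinarith [sq_abs (h - k), sq_abs h, abs_nonneg (h - k), abs_nonneg h]
    -- upper bound via slope to the right
    have up : Pd (t + h) ≤ (P (t + (h + k)) - P (t + h)) / k := by
      have hs := hconv.le_slope_of_hasDerivAt (Set.mem_univ (t + h))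
        (Set.mem_univ (t + (h + k))) (by linarith) (hP (t + h))
      rw [slope_def_field] at hs
      calc Pd (t + h) ≤ (P (t + (h + k)) - P (t + h)) / (t + (h + k) - (t + h)) := hs
        _ = (P (t + (h + k)) - P (t + h)) / k := by ring_nf
    have lo : (P (t + h) - P (t + (h - k))) / k ≤ Pd (t + h) := by
      have hs := hconv.slope_le_of_hasDerivAt (Set.mem_univ (t + (h - k)))
        (Set.mem_univ (t + h)) (by linarith) (hP (t + h))
      rw [slope_def_field] at hs
      calc (P (t + h) - P (t + (h - k))) / k
          = (P (t + h) - P (t + (h - k))) / (t + h - (t + (h - k))) := by ring_nf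
        _ ≤ Pd (t + h) := hs
    -- translate into bounds on Δ := Pd (t+h) - Pd t - 2*c*h
    have hup2 : k * (Pd (t + h) - Pd t - 2 * c * h) ≤ c * k ^ 2 + e (h + k) - e h := by
      have h1 : k * Pd (t + h) ≤ P (t + (h + k)) - P (t + h) := by
        rw [← le_div_iff₀' hkpos]
        calc Pd (t + h) ≤ (P (t + (h + k)) - P (t + h)) / k := up
          _ = (P (t + (h + k)) - P (t + h)) / k := rfl
      rw [hPval (h + k), hPval h] at h1
      ring_nf at h1 ⊢
      linarith [h1]
    have hlo2 : -(c * k ^ 2) + e h - e (h - k) ≤ k * (Pd (t + h) - Pd t - 2 * c * h) := by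
      have h1 : P (t + h) - P (t + (h - k)) ≤ k * Pd (t + h) := by
        rw [← div_le_iff₀' hkpos]
        exact lo
      rw [hPval (h - k), hPval h] at h1
      ring_nf at h1 ⊢
      linarith [h1]
    -- now combine
    have hckbound : c * k ^ 2 ≤ ρ / 2 * |h| * k := by
      have : c * k = c * ε * |h| := by rw [hkdef]; ring
      calc c * k ^ 2 = (c * k) * k := by ring
        _ = (c * ε * |h|) * k := by rw [this]
        _ ≤ (ρ / 2 * |h|) * k := by
            apply mul_le_mul_of_nonneg_right _ hkpos.le
            exact mul_le_mul_of_nonneg_right hcε (abs_nonneg h)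
    have hebound : |e (h + k)| + |e h| ≤ ρ / 2 * |h| * k := by
      have h5 : η * (h + k) ^ 2 + η * h ^ 2 ≤ 5 * η * h ^ 2 := by nlinarith [hηpos]
      have h6 : (5:ℝ) * η * h ^ 2 = ρ / 2 * |h| * k := by
        rw [hkdef, hηdef]
        rw [← sq_abs h]
        ring
      calc |e (h + k)| + |e h| ≤ η * (h + k) ^ 2 + η * h ^ 2 := by linarith
        _ ≤ 5 * η * h ^ 2 := h5
        _ = ρ / 2 * |h| * k := h6
    have hebound2 : |e h| + |e (h - k)| ≤ ρ / 2 * |h| * k := by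
      have h5 : η * h ^ 2 + η * (h - k) ^ 2 ≤ 5 * η * h ^ 2 := by nlinarith [hηpos]
      have h6 : (5:ℝ) * η * h ^ 2 = ρ / 2 * |h| * k := by
        rw [hkdef, hηdef]
        rw [← sq_abs h]
        ring
      calc |e h| + |e (h - k)| ≤ η * h ^ 2 + η * (h - k) ^ 2 := by linarith
        _ ≤ 5 * η * h ^ 2 := h5
        _ = ρ / 2 * |h| * k := h6
    rw [abs_le]
    constructor
    · rw [← mul_le_mul_iff_right₀ hkpos]
      have : k * (ρ * |h|) = ρ * |h| * k := by ring
      calc k * -(ρ * |h|) = -(ρ * |h| * k) := by ring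
        _ ≤ -(c * k ^ 2) - (|e h| + |e (h - k)|) := by nlinarith [hckbound, hebound2]
        _ ≤ -(c * k ^ 2) + e h - e (h - k) := by
            have := abs_le.mp (le_refl |e h|) -- dummy
            have h7 : -|e h| ≤ e h := neg_abs_le _
            have h8 : e (h - k) ≤ |e (h - k)| := le_abs_self _
            linarith
        _ ≤ k * (Pd (t + h) - Pd t - 2 * c * h) := hlo2
    · rw [← mul_le_mul_iff_right₀ hkpos]
      calc k * (Pd (t + h) - Pd t - 2 * c * h) ≤ c * k ^ 2 + e (h + k) - e h := hup2
        _ ≤ c * k ^ 2 + (|e (h + k)| + |e h|) := by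
            have h7 : e (h + k) ≤ |e (h + k)| := le_abs_self _
            have h8 : -|e h| ≤ e h := neg_abs_le _
            linarith
        _ ≤ ρ / 2 * |h| * k + ρ / 2 * |h| * k := by linarith [hckbound, hebound]
        _ = k * (ρ * |h|) := by ring
  -- conclude
  rw [hasDerivAt_iff_isLittleO, isLittleO_iff]
  intro ρ hρ
  have hk := key ρ hρ
  have ht : Filter.Tendsto (fun y : ℝ => y - t) (nhds t) (nhds 0) := by
    have : Filter.Tendsto (fun y : ℝ => y - t) (nhds t) (nhds (t - t)) :=
      (continuous_id.sub continuous_const).tendsto t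
    simpa using this
  filter_upwards [ht.eventually hk] with y hy
  have hyt : t + (y - t) = y := by ring
  rw [hyt] at hy
  rw [Real.norm_eq_abs, Real.norm_eq_abs, smul_eq_mul]
  calc |Pd y - Pd t - (y - t) * (2 * c)| = |Pd y - Pd t - 2 * c * (y - t)| := by ring_nf
    _ ≤ ρ * |y - t| := hy

theorem extended_system_energy_identity
    {H : Type*} [NormedAddCommGroup H] [InnerProductSpace ℝ H]
    (A : H →ₗ[ℝ] H)
    (hAsym : ∀ x y : H, ⟪A x, y⟫ = ⟪x, A y⟫)
    (m : ℕ) (r : ℝ) (hr : 0 ≤ r)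
    (a lam : Fin m → ℝ) (ha : ∀ k, 0 < a k) (hlam : ∀ k, 0 < lam k)
    (u : ℝ → H) (v : Fin m → ℝ → H)
    (u' : ℝ → H) (v' : Fin m → ℝ → H)
    (hu : ∀ t, HasDerivAt u (u' t) t)
    (hv : ∀ k t, HasDerivAt (v k) (v' k t) t)
    (heq : ∀ t, (1 + r + ∑ k, a k / lam k) • u' t - ∑ k, (a k / lam k) • v' k t
        = -(A (u t)))
    (hveq : ∀ k t, v' k t + lam k • v k t = u' t) :
    ∀ t : ℝ,
      (1 + r) * ‖u' t‖^2
        + (1/2) * deriv (fun s => ⟪A (u s), u s⟫ + ∑ k, a k * ‖v k s‖^2) t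
        + ∑ k, (a k / lam k) * ‖v' k t - u' t‖^2 = 0 := by
  have hr1 : (0:ℝ) < 1 + r := by linarith
  have hlam' : ∀ k, lam k ≠ 0 := fun k => ne_of_gt (hlam k)
  -- Step 1: A (u s) = -((1+r) • u' s + ∑ a k • v k s)
  have hAu : ∀ s, A (u s) = -((1 + r) • u' s + ∑ k, a k • v k s) := by
    intro s
    have h1 := heq s
    have h2 : ∀ k : Fin m, (a k / lam k) • v' k s = (a k / lam k) • u' s - a k • v k s := by
      intro k
      have h3 : v' k s = u' s - lam k • v k s := eq_sub_of_add_eq (hveq k s)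
      rw [h3, smul_sub, smul_smul, div_mul_cancel₀ _ (hlam' k)]
    have h4 : ∑ k, (a k / lam k) • v' k s
        = (∑ k, a k / lam k) • u' s - ∑ k, a k • v k s := by
      rw [Finset.sum_congr rfl fun k _ => h2 k, Finset.sum_sub_distrib, Finset.sum_smul]
    rw [h4] at h1
    have h5 : (1 + r + ∑ k, a k / lam k) • u' s
        - ((∑ k, a k / lam k) • u' s - ∑ k, a k • v k s)
        = (1 + r) • u' s + ∑ k, a k • v k s := by
      module
    rw [h5] at h1
    exact (neg_eq_iff_eq_neg.mp h1.symm)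
  -- z-curve derivatives
  have hz : ∀ (k : Fin m) (s : ℝ), HasDerivAt (fun σ => u σ - v k σ) (lam k • v k s) s := by
    intro k s
    have h1 := (hu s).sub (hv k s)
    have h2 : u' s - v' k s = lam k • v k s := by
      rw [← hveq k s]; abel
    rwa [h2] at h1
  -- definitions
  set f : ℝ → ℝ := fun s => ⟪A (u s), u s⟫ + ∑ k, a k * ‖v k s‖^2 with hf
  set N : ℝ → ℝ := fun s => (1 + r) * ‖u s‖ ^ 2 + ∑ k, (a k / lam k) * ‖u s - v k s‖ ^ 2 with hN
  set g : ℝ → ℝ := fun s => (1 + r) * ‖u' s‖ ^ 2 + ∑ k, (a k / lam k) * ‖lam k • v k s‖ ^ 2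
    with hg
  have hgnn : ∀ s, 0 ≤ g s := by
    intro s
    simp only [hg]
    apply add_nonneg
    · apply mul_nonneg (by linarith) (by positivity)
    · apply Finset.sum_nonneg
      intro k _
      apply mul_nonneg (div_nonneg (ha k).le (hlam k).le) (by positivity)
  -- the key value identity
  have hval : ∀ s : ℝ, 2 * (1 + r) * ⟪u' s, u s⟫ + ∑ k, 2 * a k * ⟪v k s, u s - v k s⟫
      = -2 * f s := by
    intro s
    simp only [hf]
    rw [hAu s, inner_neg_left, inner_add_left, sum_inner, real_inner_smul_left]
    have hterm : ∑ k : Fin m, ⟪a k • v k s, u s⟫ = ∑ k : Fin m, a k * ⟪v k s, u s⟫ :=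
      Finset.sum_congr rfl fun k _ => real_inner_smul_left _ _ _
    have hterm2 : ∑ k : Fin m, 2 * a k * ⟪v k s, u s - v k s⟫
        = ∑ k : Fin m, (2 * (a k * ⟪v k s, u s⟫) - 2 * (a k * ‖v k s‖ ^ 2)) := by
      apply Finset.sum_congr rfl
      intro k _
      rw [inner_sub_right, real_inner_self_eq_norm_sq]
      ring
    rw [hterm, hterm2, Finset.sum_sub_distrib, ← Finset.mul_sum, ← Finset.mul_sum]
    ring
  -- derivative of N
  have hNd : ∀ s : ℝ, HasDerivAt N (-2 * f s) s := by
    intro s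
    have hu2 : HasDerivAt (fun σ => ‖u σ‖ ^ 2) (2 * ⟪u' s, u s⟫) s := by
      have h := HasDerivAt.inner ℝ (hu s) (hu s)
      have heq2 : (fun σ => ⟪u σ, u σ⟫) = fun σ => ‖u σ‖ ^ 2 := by
        funext σ; exact real_inner_self_eq_norm_sq _
      rw [heq2] at h
      exact h.congr_deriv (by rw [real_inner_comm]; ring)
    have hz2 : ∀ k : Fin m, HasDerivAt (fun σ => ‖u σ - v k σ‖ ^ 2)
        (2 * ⟪lam k • v k s, u s - v k s⟫) s := by
      intro k
      have h := HasDerivAt.inner ℝ (hz k s) (hz k s)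
      have heq2 : (fun σ => ⟪u σ - v k σ, u σ - v k σ⟫) = fun σ => ‖u σ - v k σ‖ ^ 2 := by
        funext σ; exact real_inner_self_eq_norm_sq _
      rw [heq2] at h
      exact h.congr_deriv (by rw [real_inner_comm]; ring)
    have hsum : HasDerivAt (fun σ => ∑ k, (a k / lam k) * ‖u σ - v k σ‖ ^ 2)
        (∑ k, (a k / lam k) * (2 * ⟪lam k • v k s, u s - v k s⟫)) s :=
      HasDerivAt.fun_sum fun k _ => (hz2 k).const_mul _
    have hN1 : HasDerivAt N ((1 + r) * (2 * ⟪u' s, u s⟫)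
        + ∑ k, (a k / lam k) * (2 * ⟪lam k • v k s, u s - v k s⟫)) s := by
      rw [hN]
      exact (hu2.const_mul (1 + r)).add hsum
    have hc1 : (1 + r) * (2 * ⟪u' s, u s⟫)
        + ∑ k, (a k / lam k) * (2 * ⟪lam k • v k s, u s - v k s⟫)
        = 2 * (1 + r) * ⟪u' s, u s⟫ + ∑ k, 2 * a k * ⟪v k s, u s - v k s⟫ := by
      have hterm : ∀ k : Fin m, (a k / lam k) * (2 * ⟪lam k • v k s, u s - v k s⟫)
          = 2 * a k * ⟪v k s, u s - v k s⟫ := by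
        intro k
        have hl := hlam' k
        rw [real_inner_smul_left]
        field_simp
      rw [Finset.sum_congr rfl fun k _ => hterm k]
      ring
    rw [← hval s, ← hc1]
    exact hN1
  -- Peano expansion of N at every point
  have hPeano : ∀ s : ℝ, (fun h : ℝ => N (s + h) - N s - h * (-2 * f s) - 2 * g s * h ^ 2)
      =o[nhds 0] fun h : ℝ => h ^ 2 := by
    intro s
    set W : ℝ → ℝ := fun σ => 2 * (1 + r) * ⟪u σ, u s⟫
      + ∑ k, (a k / lam k) * (2 * ⟪u σ - v k σ, u s - v k s⟫) with hW
    set W1 : ℝ → ℝ := fun σ => 2 * (1 + r) * ⟪u' σ, u s⟫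
      + ∑ k, 2 * a k * ⟪v k σ, u s - v k s⟫ with hW1
    have hWd : ∀ σ, HasDerivAt W (W1 σ) σ := by
      intro σ
      have h1 : HasDerivAt (fun σ => ⟪u σ, u s⟫) (⟪u' σ, u s⟫) σ := by
        have := HasDerivAt.inner ℝ (hu σ) (hasDerivAt_const σ (u s))
        simpa using this
      have h2 : ∀ k : Fin m, HasDerivAt (fun σ => ⟪u σ - v k σ, u s - v k s⟫)
          (⟪lam k • v k σ, u s - v k s⟫) σ := by
        intro k
        have := HasDerivAt.inner ℝ (hz k σ) (hasDerivAt_const σ (u s - v k s))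
        simpa using this
      have h3 : HasDerivAt W (2 * (1 + r) * ⟪u' σ, u s⟫
          + ∑ k, (a k / lam k) * (2 * ⟪lam k • v k σ, u s - v k s⟫)) σ := by
        rw [hW]
        exact (h1.const_mul _).add
          (HasDerivAt.fun_sum fun k _ => (((h2 k).const_mul 2).const_mul _))
      have h4 : 2 * (1 + r) * ⟪u' σ, u s⟫
          + ∑ k, (a k / lam k) * (2 * ⟪lam k • v k σ, u s - v k s⟫) = W1 σ := by
        simp only [hW1]
        congr 1
        apply Finset.sum_congr rfl
        intro k _
        have hl := hlam' k
        rw [real_inner_smul_left]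
        field_simp
      rw [← h4]
      exact h3
    have hW1eq : W1 = fun σ => -2 * ⟪u σ, A (u s)⟫
        - ∑ k, 2 * a k * ⟪v k σ, u s⟫ + ∑ k, 2 * a k * ⟪v k σ, u s - v k s⟫ := by
      funext σ
      simp only [hW1]
      have h4 : ((1:ℝ) + r) • u' σ = -(A (u σ)) - ∑ k, a k • v k σ := by
        rw [hAu σ]; module
      have h6 : (1 + r) * ⟪u' σ, u s⟫ = -⟪u σ, A (u s)⟫ - ∑ k, a k * ⟪v k σ, u s⟫ := by
        rw [← real_inner_smul_left, h4, inner_sub_left, inner_neg_left, sum_inner, hAsym]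
        congr 1
        apply Finset.sum_congr rfl
        intro k _
        exact real_inner_smul_left _ _ _
      have h7 : ∑ k : Fin m, 2 * a k * ⟪v k σ, u s⟫ = 2 * ∑ k : Fin m, a k * ⟪v k σ, u s⟫ := by
        rw [Finset.mul_sum]
        exact Finset.sum_congr rfl fun k _ => by ring
      linarith [h6, h7]
    have hW1d : HasDerivAt W1 (-2 * ⟪u' s, A (u s)⟫
        - ∑ k, 2 * a k * ⟪v' k s, u s⟫ + ∑ k, 2 * a k * ⟪v' k s, u s - v k s⟫) s := by
      rw [hW1eq]
      apply HasDerivAt.add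
      · apply HasDerivAt.sub
        · have h0 := HasDerivAt.inner ℝ (hu s) (hasDerivAt_const s (A (u s)))
          have h8 := h0.const_mul (-2 : ℝ)
          simpa using h8
        · apply HasDerivAt.fun_sum
          intro k _
          have h0 := HasDerivAt.inner ℝ (hv k s) (hasDerivAt_const s (u s))
          have h8 := h0.const_mul (2 * a k)
          simpa using h8
      · apply HasDerivAt.fun_sum
        intro k _
        have h0 := HasDerivAt.inner ℝ (hv k s) (hasDerivAt_const s (u s - v k s))
        have h8 := h0.const_mul (2 * a k)
        simpa using h8
    have hD : -2 * ⟪u' s, A (u s)⟫ - ∑ k, 2 * a k * ⟪v' k s, u s⟫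
        + ∑ k, 2 * a k * ⟪v' k s, u s - v k s⟫ = 2 * g s := by
      have h8 : ⟪u' s, A (u s)⟫
          = -((1 + r) * ⟪u' s, u' s⟫ + ∑ k, a k * ⟪u' s, v k s⟫) := by
        rw [hAu s, inner_neg_right, inner_add_right, real_inner_smul_right, inner_sum]
        have hx : ∑ k : Fin m, ⟪u' s, a k • v k s⟫ = ∑ k : Fin m, a k * ⟪u' s, v k s⟫ :=
          Finset.sum_congr rfl fun k _ => real_inner_smul_right _ _ _
        rw [hx]
      have h9 : ∑ k : Fin m, 2 * a k * ⟪v' k s, u s - v k s⟫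
            - ∑ k : Fin m, 2 * a k * ⟪v' k s, u s⟫
          = -∑ k : Fin m, 2 * a k * ⟪v' k s, v k s⟫ := by
        rw [← Finset.sum_sub_distrib, ← Finset.sum_neg_distrib]
        apply Finset.sum_congr rfl
        intro k _
        rw [inner_sub_right]
        ring
      have h11 : ∑ k : Fin m, 2 * a k * ⟪v' k s, v k s⟫
          = ∑ k : Fin m, 2 * a k * ⟪u' s, v k s⟫
            - 2 * ∑ k : Fin m, a k * lam k * ⟪v k s, v k s⟫ := by
        rw [Finset.mul_sum, ← Finset.sum_sub_distrib]
        apply Finset.sum_congr rfl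
        intro k _
        have h3 : v' k s = u' s - lam k • v k s := eq_sub_of_add_eq (hveq k s)
        rw [h3, inner_sub_left, real_inner_smul_left]
        ring
      have h12 : ∑ k : Fin m, (a k / lam k) * ‖lam k • v k s‖ ^ 2
          = ∑ k : Fin m, a k * lam k * ⟪v k s, v k s⟫ := by
        apply Finset.sum_congr rfl
        intro k _
        have hl := hlam' k
        rw [← real_inner_self_eq_norm_sq, real_inner_smul_left, real_inner_smul_right]
        field_simp
      have h13 : ∑ k : Fin m, 2 * a k * ⟪u' s, v k s⟫
          = 2 * ∑ k : Fin m, a k * ⟪u' s, v k s⟫ := by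
        rw [Finset.mul_sum]
        exact Finset.sum_congr rfl fun k _ => by ring
      have h15 : ⟪u' s, u' s⟫ = ‖u' s‖ ^ 2 := real_inner_self_eq_norm_sq _
      rw [h15] at h8
      simp only [hg]
      rw [h12]
      linarith [h8, h9, h11, h13]
    have hW1d2 : HasDerivAt W1 (2 * g s) s := hD ▸ hW1d
    have hTW := taylor2_littleO hWd hW1d2
    have hQu := normsq_littleO (hu s)
    have hQz : ∀ k : Fin m, (fun h : ℝ =>
        ‖(fun σ => u σ - v k σ) (s + h) - (fun σ => u σ - v k σ) s‖ ^ 2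
          - h ^ 2 * ‖lam k • v k s‖ ^ 2) =o[nhds 0] fun h : ℝ => h ^ 2 :=
      fun k => normsq_littleO (hz k s)
    have hNdecomp : ∀ σ : ℝ, N σ = (1 + r) * ‖u σ - u s‖ ^ 2
        + ∑ k, (a k / lam k) * ‖u σ - v k σ - (u s - v k s)‖ ^ 2 + W σ - N s := by
      intro σ
      simp only [hN, hW]
      have h1 : ∑ k : Fin m, (a k / lam k) * ‖u σ - v k σ - (u s - v k s)‖ ^ 2
          = ∑ k : Fin m, ((a k / lam k) * ‖u σ - v k σ‖ ^ 2
            - (a k / lam k) * (2 * ⟪u σ - v k σ, u s - v k s⟫)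
            + (a k / lam k) * ‖u s - v k s‖ ^ 2) := by
        apply Finset.sum_congr rfl
        intro k _
        rw [norm_sub_sq_real (u σ - v k σ) (u s - v k s)]
        ring
      have h2 : ∑ k : Fin m, ((a k / lam k) * ‖u σ - v k σ‖ ^ 2
            - (a k / lam k) * (2 * ⟪u σ - v k σ, u s - v k s⟫)
            + (a k / lam k) * ‖u s - v k s‖ ^ 2)
          = ∑ k : Fin m, (a k / lam k) * ‖u σ - v k σ‖ ^ 2
            - ∑ k : Fin m, (a k / lam k) * (2 * ⟪u σ - v k σ, u s - v k s⟫)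
            + ∑ k : Fin m, (a k / lam k) * ‖u s - v k s‖ ^ 2 := by
        rw [Finset.sum_add_distrib, Finset.sum_sub_distrib]
      rw [h1, h2, norm_sub_sq_real (u σ) (u s)]
      ring
    have e2 : W s = 2 * N s := by
      simp only [hW, hN]
      have h1 : ∑ k : Fin m, (a k / lam k) * (2 * ⟪u s - v k s, u s - v k s⟫)
          = 2 * ∑ k : Fin m, (a k / lam k) * ‖u s - v k s‖ ^ 2 := by
        rw [Finset.mul_sum]
        apply Finset.sum_congr rfl
        intro k _
        rw [real_inner_self_eq_norm_sq]
        ring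
      rw [real_inner_self_eq_norm_sq, h1]
      ring
    have e3 : W1 s = -2 * f s := by
      simp only [hW1]
      exact hval s
    have hident : (fun h : ℝ => N (s + h) - N s - h * (-2 * f s) - 2 * g s * h ^ 2)
        = fun h : ℝ => (W (s + h) - W s - h * W1 s - h ^ 2 * (2 * g s / 2))
          + ((1 + r) * (‖u (s + h) - u s‖ ^ 2 - h ^ 2 * ‖u' s‖ ^ 2)
          + ∑ k, (a k / lam k) *
              (‖(fun σ => u σ - v k σ) (s + h) - (fun σ => u σ - v k σ) s‖ ^ 2
                - h ^ 2 * ‖lam k • v k s‖ ^ 2)) := by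
      funext h
      simp only []
      have e1 := hNdecomp (s + h)
      have hsplit : ∑ k : Fin m, (a k / lam k) *
            (‖u (s + h) - v k (s + h) - (u s - v k s)‖ ^ 2 - h ^ 2 * ‖lam k • v k s‖ ^ 2)
          = ∑ k : Fin m, (a k / lam k) * ‖u (s + h) - v k (s + h) - (u s - v k s)‖ ^ 2
            - h ^ 2 * ∑ k : Fin m, (a k / lam k) * ‖lam k • v k s‖ ^ 2 := by
        rw [Finset.mul_sum, ← Finset.sum_sub_distrib]
        apply Finset.sum_congr rfl
        intro k _
        ring
      rw [hsplit, e1, e2, e3]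
      simp only [hg]
      ring
    rw [hident]
    exact hTW.add ((hQu.const_mul_left (1 + r)).add
      (IsLittleO.fun_sum fun k _ => (hQz k).const_mul_left _))
  -- continuity and convexity of N
  have hNc : Continuous N := continuous_iff_continuousAt.mpr fun s => (hNd s).continuousAt
  have hconv : ConvexOn ℝ Set.univ N := by
    apply convexOn_of_local_support hNc (L := fun s => -2 * f s)
    intro s ε hε
    have hb := (isLittleO_iff.mp (hPeano s)) hε
    have ht : Filter.Tendsto (fun y : ℝ => y - s) (nhds s) (nhds 0) := by
      have h0 : Filter.Tendsto (fun y : ℝ => y - s) (nhds s) (nhds (s - s)) :=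
        (continuous_id.sub continuous_const).tendsto s
      simpa using h0
    filter_upwards [ht.eventually hb] with y hy
    have hys : s + (y - s) = y := by ring
    rw [hys, Real.norm_eq_abs, Real.norm_eq_abs] at hy
    have h3 : |(y - s) ^ 2| = (y - s) ^ 2 := abs_of_nonneg (sq_nonneg _)
    rw [h3] at hy
    have h1 := abs_le.mp hy
    have h2 : 0 ≤ 2 * g s * (y - s) ^ 2 :=
      mul_nonneg (mul_nonneg (by norm_num) (hgnn s)) (sq_nonneg _)
    linarith [h1.1, h2]
  -- conclusion at t
  intro t
  have h2d := second_deriv_of_convex_peano (P := N) (Pd := fun s => -2 * f s) (c := 2 * g t)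
    hNd hconv (by linarith [hgnn t]) (hPeano t)
  have h3d : HasDerivAt f (-(2 * g t)) t := by
    have h4 := h2d.const_mul (-(1:ℝ)/2)
    have h5 : (fun s => (-(1:ℝ)/2) * ((fun s => -2 * f s) s)) = f := by
      funext x
      show (-(1:ℝ)/2) * (-2 * f x) = f x
      ring
    rw [h5] at h4
    exact h4.congr_deriv (by ring)
  rw [h3d.deriv]
  have hvu : ∀ k : Fin m, ‖v' k t - u' t‖ ^ 2 = ‖lam k • v k t‖ ^ 2 := by
    intro k
    have h1 : v' k t - u' t = -(lam k • v k t) := by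
      rw [← hveq k t]; abel
    rw [h1, norm_neg]
  simp only [hvu, hg]
  ring
end

section
/- Unconditional stability of the two-level weighted scheme: let H be a real inner product space, A symmetric positive semidefinite, σ ≥ 1/2, τ > 0, r ≥ 0, a_k > 0, λ_k > 0. Suppose sequences y^n, w_k^n in H satisfy (1 + r + Σ_k a_k/λ_k)(y^{n+1}-y^n)/τ - Σ_k (a_k/λ_k)(w_k^{n+1}-w_k^n)/τ + A(σ y^{n+1} + (1-σ) y^n) = 0 and (w_k^{n+1}-w_k^n)/τ + λ_k (σ w_k^{n+1} + (1-σ) w_k^n) - (y^{n+1}-y^n)/τ = 0. Then for every n, ⟨A y^{n+1}, y^{n+1}⟩ + Σ_k a_k ‖w_k^{n+1}‖² ≤ ⟨A y^n, y^n⟩ + Σ_k a_k ‖w_k^n‖². -/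
open scoped RealInnerProductSpace

lemma wbar_id {H : Type*} [NormedAddCommGroup H] [InnerProductSpace ℝ H]
    (σ : ℝ) (u v : H) :
    ⟪σ • u + (1 - σ) • v, u - v⟫
      = (1/2) * (‖u‖^2 - ‖v‖^2) + (σ - 1/2) * ‖u - v‖^2 := by
  have hs : ⟪v, u⟫ = ⟪u, v⟫ := real_inner_comm u v
  have h1 : ‖u‖^2 = ⟪u, u⟫ := (real_inner_self_eq_norm_sq u).symm
  have h2 : ‖v‖^2 = ⟪v, v⟫ := (real_inner_self_eq_norm_sq v).symm
  have h3 : ‖u - v‖^2 = ⟪u - v, u - v⟫ := (real_inner_self_eq_norm_sq _).symm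
  rw [h1, h2, h3]
  simp only [inner_add_left, inner_sub_left, inner_sub_right, real_inner_smul_left]
  linear_combination (1/2 : ℝ) * hs

theorem two_level_scheme_unconditionally_stable
    {H : Type*} [NormedAddCommGroup H] [InnerProductSpace ℝ H]
    (A : H →ₗ[ℝ] H)
    (hAsym : ∀ x y : H, ⟪A x, y⟫ = ⟪x, A y⟫)
    (hApos : ∀ x : H, 0 ≤ ⟪A x, x⟫)
    (m : ℕ) (σ τ r : ℝ) (hσ : 1/2 ≤ σ) (hτ : 0 < τ) (hr : 0 ≤ r)
    (a lam : Fin m → ℝ) (ha : ∀ k, 0 < a k) (hlam : ∀ k, 0 < lam k)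
    (y : ℕ → H) (w : Fin m → ℕ → H)
    (heq : ∀ n, (1 + r + ∑ k, a k / lam k) • (τ⁻¹ • (y (n+1) - y n))
        - ∑ k, (a k / lam k) • (τ⁻¹ • (w k (n+1) - w k n))
        + A (σ • y (n+1) + (1 - σ) • y n) = 0)
    (hweq : ∀ k n, τ⁻¹ • (w k (n+1) - w k n)
        + lam k • (σ • w k (n+1) + (1 - σ) • w k n)
        - τ⁻¹ • (y (n+1) - y n) = 0) :
    ∀ n : ℕ, ⟪A (y (n+1)), y (n+1)⟫ + ∑ k, a k * ‖w k (n+1)‖^2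
      ≤ ⟪A (y n), y n⟫ + ∑ k, a k * ‖w k n‖^2 := by
  intro n
  have hτ' : (0:ℝ) < τ⁻¹ := inv_pos.mpr hτ
  -- inner product of heq with d = y(n+1) - y n
  have h1 : (1 + r + ∑ k, a k / lam k) * (τ⁻¹ * ⟪y (n+1) - y n, y (n+1) - y n⟫)
      - ∑ k, (a k / lam k) * (τ⁻¹ * ⟪w k (n+1) - w k n, y (n+1) - y n⟫)
      + ⟪A (σ • y (n+1) + (1 - σ) • y n), y (n+1) - y n⟫ = 0 := by
    have h := congrArg (fun z : H => ⟪z, y (n+1) - y n⟫) (heq n)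
    simp only [inner_add_left, inner_sub_left, real_inner_smul_left, map_add,
      map_smul, sum_inner, inner_zero_left] at h ⊢
    linarith [h]
  -- per-k bound
  have hk : ∀ k, (a k / lam k) * (τ⁻¹ * ⟪w k (n+1) - w k n, y (n+1) - y n⟫)
      ≤ (a k / lam k) * (τ⁻¹ * ⟪y (n+1) - y n, y (n+1) - y n⟫)
        - (a k / 2) * (‖w k (n+1)‖^2 - ‖w k n‖^2) := by
    intro k
    have h2 : τ⁻¹ * ⟪w k (n+1) - w k n, y (n+1) - y n⟫
        + lam k * ⟪σ • w k (n+1) + (1 - σ) • w k n, y (n+1) - y n⟫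
        - τ⁻¹ * ⟪y (n+1) - y n, y (n+1) - y n⟫ = 0 := by
      have h := congrArg (fun z : H => ⟪z, y (n+1) - y n⟫) (hweq k n)
      simp only [inner_add_left, inner_sub_left, real_inner_smul_left,
        inner_zero_left] at h ⊢
      linarith [h]
    have h3 : τ⁻¹ * ⟪w k (n+1) - w k n, σ • w k (n+1) + (1 - σ) • w k n⟫
        + lam k * ⟪σ • w k (n+1) + (1 - σ) • w k n, σ • w k (n+1) + (1 - σ) • w k n⟫
        - τ⁻¹ * ⟪y (n+1) - y n, σ • w k (n+1) + (1 - σ) • w k n⟫ = 0 := by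
      have h := congrArg (fun z : H => ⟪z, σ • w k (n+1) + (1 - σ) • w k n⟫) (hweq k n)
      simp only [inner_add_left, inner_sub_left, real_inner_smul_left,
        inner_zero_left] at h ⊢
      linarith [h]
    have idw : ⟪σ • w k (n+1) + (1 - σ) • w k n, w k (n+1) - w k n⟫
        = (1/2) * (‖w k (n+1)‖^2 - ‖w k n‖^2)
          + (σ - 1/2) * ‖w k (n+1) - w k n‖^2 := wbar_id σ _ _
    have hc1 : ⟪w k (n+1) - w k n, σ • w k (n+1) + (1 - σ) • w k n⟫
        = ⟪σ • w k (n+1) + (1 - σ) • w k n, w k (n+1) - w k n⟫ := real_inner_comm _ _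
    have hc2 : ⟪y (n+1) - y n, σ • w k (n+1) + (1 - σ) • w k n⟫
        = ⟪σ • w k (n+1) + (1 - σ) • w k n, y (n+1) - y n⟫ := real_inner_comm _ _
    -- from h3: ⟪wb, d⟫ = ⟪wb, dw⟫ + τ * lam k * ⟪wb, wb⟫
    have hτ0 : τ * τ⁻¹ = 1 := mul_inv_cancel₀ hτ.ne'
    have hwd : ⟪σ • w k (n+1) + (1 - σ) • w k n, y (n+1) - y n⟫
        = ⟪σ • w k (n+1) + (1 - σ) • w k n, w k (n+1) - w k n⟫
          + τ * lam k * ⟪σ • w k (n+1) + (1 - σ) • w k n,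
              σ • w k (n+1) + (1 - σ) • w k n⟫ := by
      rw [← hc1, ← hc2]
      linear_combination (-τ) * h3
        + (⟪w k (n+1) - w k n, σ • w k (n+1) + (1 - σ) • w k n⟫
          - ⟪y (n+1) - y n, σ • w k (n+1) + (1 - σ) • w k n⟫) * hτ0
    have hge : (a k / 2) * (‖w k (n+1)‖^2 - ‖w k n‖^2)
        ≤ a k * ⟪σ • w k (n+1) + (1 - σ) • w k n, y (n+1) - y n⟫ := by
      rw [hwd, idw]
      have t1 : 0 ≤ a k * ((σ - 1/2) * ‖w k (n+1) - w k n‖^2) :=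
        mul_nonneg (ha k).le (mul_nonneg (by linarith) (sq_nonneg _))
      have t2 : 0 ≤ a k * (τ * lam k * ⟪σ • w k (n+1) + (1 - σ) • w k n,
          σ • w k (n+1) + (1 - σ) • w k n⟫) :=
        mul_nonneg (ha k).le
          (mul_nonneg (mul_nonneg hτ.le (hlam k).le) real_inner_self_nonneg)
      nlinarith [t1, t2]
    have hl : lam k ≠ 0 := (hlam k).ne'
    have key : (a k / lam k) * (τ⁻¹ * ⟪w k (n+1) - w k n, y (n+1) - y n⟫)
        = (a k / lam k) * (τ⁻¹ * ⟪y (n+1) - y n, y (n+1) - y n⟫)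
          - a k * ⟪σ • w k (n+1) + (1 - σ) • w k n, y (n+1) - y n⟫ := by
      have hlc : lam k * (lam k)⁻¹ = 1 := mul_inv_cancel₀ hl
      rw [div_eq_mul_inv]
      linear_combination (a k * (lam k)⁻¹) * h2
        + (-(a k * ⟪σ • w k (n+1) + (1 - σ) • w k n, y (n+1) - y n⟫)) * hlc
    rw [key]
    linarith
  have hsum : ∑ k, (a k / lam k) * (τ⁻¹ * ⟪w k (n+1) - w k n, y (n+1) - y n⟫)
      ≤ ∑ k, ((a k / lam k) * (τ⁻¹ * ⟪y (n+1) - y n, y (n+1) - y n⟫)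
        - (a k / 2) * (‖w k (n+1)‖^2 - ‖w k n‖^2)) :=
    Finset.sum_le_sum fun k _ => hk k
  -- identity for A
  have idA : ⟪A (σ • y (n+1) + (1 - σ) • y n), y (n+1) - y n⟫
      = (1/2) * (⟪A (y (n+1)), y (n+1)⟫ - ⟪A (y n), y n⟫)
        + (σ - 1/2) * ⟪A (y (n+1) - y n), y (n+1) - y n⟫ := by
    have hs : ⟪A (y n), y (n+1)⟫ = ⟪A (y (n+1)), y n⟫ := by
      rw [hAsym, real_inner_comm]
    simp only [map_add, map_smul, map_sub, inner_add_left, inner_sub_left,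
      inner_sub_right, real_inner_smul_left]
    linear_combination (1/2 : ℝ) * hs
  have hAd : 0 ≤ (σ - 1/2) * ⟪A (y (n+1) - y n), y (n+1) - y n⟫ :=
    mul_nonneg (by linarith) (hApos _)
  have hdd0 : 0 ≤ ⟪y (n+1) - y n, y (n+1) - y n⟫ := real_inner_self_nonneg
  -- expand sums
  rw [Finset.sum_sub_distrib, ← Finset.sum_mul] at hsum
  have hsplit : ∑ k, (a k / 2) * (‖w k (n+1)‖^2 - ‖w k n‖^2)
      = (∑ k, (a k / 2) * ‖w k (n+1)‖^2) - ∑ k, (a k / 2) * ‖w k n‖^2 := by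
    rw [← Finset.sum_sub_distrib]
    exact Finset.sum_congr rfl fun k _ => by ring
  rw [hsplit] at hsum
  have e1 : ∑ k, a k * ‖w k (n+1)‖^2 = 2 * ∑ k, (a k / 2) * ‖w k (n+1)‖^2 := by
    rw [Finset.mul_sum]
    exact Finset.sum_congr rfl fun k _ => by ring
  have e2 : ∑ k, a k * ‖w k n‖^2 = 2 * ∑ k, (a k / 2) * ‖w k n‖^2 := by
    rw [Finset.mul_sum]
    exact Finset.sum_congr rfl fun k _ => by ring
  have hpos : 0 ≤ (1 + r) * (τ⁻¹ * ⟪y (n+1) - y n, y (n+1) - y n⟫) := by positivity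
  rw [e1, e2]
  nlinarith [h1, hsum, idA, hAd, hpos]
end

section
/- Discrete a priori estimate: under the two-level scheme with σ ≥ 1/2 and initial data w_k^0 = 0, for all n ≥ 0 one has ⟨A y^{n+1}, y^{n+1}⟩ + Σ_k a_k ‖w_k^{n+1}‖² ≤ ⟨A y^0, y^0⟩. -/
open scoped RealInnerProductSpace

private lemma two_level_step
    {H : Type*} [NormedAddCommGroup H] [InnerProductSpace ℝ H]
    (A : H →ₗ[ℝ] H)
    (hAsym : ∀ x y : H, ⟪A x, y⟫ = ⟪x, A y⟫)
    (hApos : ∀ x : H, 0 ≤ ⟪A x, x⟫)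
    (m : ℕ) (σ τ r : ℝ) (hσ : 1/2 ≤ σ) (hτ : 0 < τ) (hr : 0 ≤ r)
    (a lam : Fin m → ℝ) (ha : ∀ k, 0 < a k) (hlam : ∀ k, 0 < lam k)
    (y : ℕ → H) (w : Fin m → ℕ → H)
    (heq : ∀ n, (1 + r + ∑ k, a k / lam k) • (τ⁻¹ • (y (n+1) - y n))
        - ∑ k, (a k / lam k) • (τ⁻¹ • (w k (n+1) - w k n))
        + A (σ • y (n+1) + (1 - σ) • y n) = 0)
    (hweq : ∀ k n, τ⁻¹ • (w k (n+1) - w k n)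
        + lam k • (σ • w k (n+1) + (1 - σ) • w k n)
        - τ⁻¹ • (y (n+1) - y n) = 0)
    (n : ℕ) :
    ⟪A (y (n+1)), y (n+1)⟫ + ∑ k, a k * ‖w k (n+1)‖^2
      ≤ ⟪A (y n), y n⟫ + ∑ k, a k * ‖w k n‖^2 := by
  set d : H := y (n+1) - y n with hd
  set dk : Fin m → H := fun k => w k (n+1) - w k n with hdk
  set s : Fin m → H := fun k => σ • w k (n+1) + (1-σ) • w k n with hs
  have hτ' : τ ≠ 0 := ne_of_gt hτ
  -- vector relation: d = dk k + (τ * lam k) • s k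
  have hrel : ∀ k, d = dk k + (τ * lam k) • s k := by
    intro k
    have h := hweq k n
    have h2 : τ⁻¹ • d = τ⁻¹ • dk k + lam k • s k := (sub_eq_zero.mp h).symm
    have := congrArg (fun z : H => τ • z) h2
    simpa [smul_smul, smul_add, mul_inv_cancel₀ hτ', mul_assoc] using this
  -- scalar identity for s·dk
  have hsdk : ∀ k, ⟪s k, dk k⟫ = (1/2)*(‖w k (n+1)‖^2 - ‖w k n‖^2) + (σ-1/2)*‖dk k‖^2 := by
    intro k
    have hn : ‖w k (n+1) - w k n‖^2 = ‖w k (n+1)‖^2 - 2*⟪w k n, w k (n+1)⟫ + ‖w k n‖^2 := by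
      rw [real_inner_comm]; exact norm_sub_sq_real _ _
    simp only [hs, hdk, inner_sub_right, inner_add_left, real_inner_smul_left,
      real_inner_self_eq_norm_sq, real_inner_comm (w k n) (w k (n+1))]
    linear_combination (1/2 - σ) * hn
  -- A identity
  have hA : ⟪A (σ • y (n+1) + (1-σ) • y n), d⟫
      = (1/2)*(⟪A (y (n+1)), y (n+1)⟫ - ⟪A (y n), y n⟫) + (σ-1/2)*⟪A d, d⟫ := by
    have hc : ⟪A (y (n+1)), y n⟫ = ⟪A (y n), y (n+1)⟫ := by
      rw [hAsym, real_inner_comm]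
    simp only [map_add, map_smul, map_sub, hd, inner_add_left, inner_sub_left,
      inner_sub_right, real_inner_smul_left, smul_eq_mul]
    rw [hc]; ring
  -- inner product of scheme with d
  have h3 := congrArg (fun z : H => (⟪z, d⟫ : ℝ)) (heq n)
  simp only [inner_add_left, inner_sub_left, sum_inner, real_inner_smul_left,
    inner_zero_left] at h3
  have e1 : (⟪y (n+1), d⟫ : ℝ) - ⟪y n, d⟫ = ‖d‖^2 := by
    rw [← inner_sub_left, ← hd, real_inner_self_eq_norm_sq]
  -- key per-k scalar identity
  have hip : ∀ k : Fin m, (⟪w k (n+1) - w k n, d⟫ : ℝ)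
      = ‖d‖^2 - (τ*lam k)*⟪s k, dk k⟫ - (τ*lam k)^2*‖s k‖^2 := by
    intro k
    have h0 : (⟪dk k, d⟫ : ℝ) = ‖d‖^2 - (τ*lam k)*⟪s k, dk k⟫ - (τ*lam k)^2*‖s k‖^2 := by
      rw [hrel k]
      have hn2 : ‖dk k + (τ*lam k) • s k‖^2
          = ‖dk k‖^2 + 2*((τ*lam k)*⟪dk k, s k⟫) + (τ*lam k)^2*‖s k‖^2 := by
        rw [norm_add_sq_real, real_inner_smul_right, norm_smul]
        rw [Real.norm_eq_abs, mul_pow, sq_abs]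
      rw [hn2]
      simp only [inner_add_right, real_inner_smul_right, real_inner_self_eq_norm_sq,
        real_inner_comm (s k) (dk k)]
      ring
    simpa only [hdk] using h0
  have hk : ∀ k : Fin m, a k / lam k * (τ⁻¹ * ((⟪w k (n+1), d⟫:ℝ) - ⟪w k n, d⟫))
      = a k / lam k * τ⁻¹ * ‖d‖^2 - a k * ⟪s k, dk k⟫ - a k * (τ * lam k) * ‖s k‖^2 := by
    intro k
    have hl : lam k ≠ 0 := (hlam k).ne'
    rw [← inner_sub_left, hip k]
    field_simp
  have hsum : ∑ k : Fin m, a k / lam k * (τ⁻¹ * ((⟪w k (n+1), d⟫:ℝ) - ⟪w k n, d⟫))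
      = (∑ k : Fin m, a k / lam k) * (τ⁻¹ * ‖d‖^2)
        - (∑ k : Fin m, a k * ⟪s k, dk k⟫) - ∑ k : Fin m, a k * (τ*lam k) * ‖s k‖^2 := by
    rw [Finset.sum_congr rfl (fun k _ => hk k)]
    rw [Finset.sum_sub_distrib, Finset.sum_sub_distrib, Finset.sum_mul]
    congr 1
    congr 1
    exact Finset.sum_congr rfl (fun k _ => by ring)
  rw [e1, hsum, hA] at h3
  have hsum2 : ∑ k : Fin m, a k * (⟪s k, dk k⟫:ℝ)
      = (1/2)*((∑ k : Fin m, a k*‖w k (n+1)‖^2) - ∑ k : Fin m, a k*‖w k n‖^2)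
        + ∑ k : Fin m, a k*((σ-1/2)*‖dk k‖^2) := by
    have hc : ∀ k : Fin m, a k * (⟪s k, dk k⟫:ℝ)
        = (a k*‖w k (n+1)‖^2 - a k*‖w k n‖^2)/2 + a k*((σ-1/2)*‖dk k‖^2) := fun k => by
      rw [hsdk k]; ring
    rw [Finset.sum_congr rfl (fun k _ => hc k), Finset.sum_add_distrib,
      ← Finset.sum_div, Finset.sum_sub_distrib]
    ring
  rw [hsum2] at h3
  have hpos1 : 0 ≤ ∑ k : Fin m, a k*((σ-1/2)*‖dk k‖^2) :=
    Finset.sum_nonneg fun k _ => mul_nonneg (ha k).le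
      (mul_nonneg (by linarith) (sq_nonneg _))
  have hpos2 : 0 ≤ ∑ k : Fin m, a k * (τ*lam k) * ‖s k‖^2 :=
    Finset.sum_nonneg fun k _ => mul_nonneg (mul_nonneg (ha k).le
      (mul_nonneg hτ.le (hlam k).le)) (sq_nonneg _)
  have hpos3 : 0 ≤ (σ-1/2) * ⟪A d, d⟫ := mul_nonneg (by linarith) (hApos d)
  have hpos4 : 0 ≤ (1+r) * (τ⁻¹ * ‖d‖^2) := by positivity
  have he : (1 + r + ∑ k : Fin m, a k / lam k) * (τ⁻¹ * ‖d‖^2)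
      - (∑ k : Fin m, a k / lam k) * (τ⁻¹ * ‖d‖^2) = (1+r) * (τ⁻¹ * ‖d‖^2) := by ring
  linarith [h3, he, hpos1, hpos2, hpos3, hpos4]

theorem two_level_scheme_a_priori_estimate
    {H : Type*} [NormedAddCommGroup H] [InnerProductSpace ℝ H]
    (A : H →ₗ[ℝ] H)
    (hAsym : ∀ x y : H, ⟪A x, y⟫ = ⟪x, A y⟫)
    (hApos : ∀ x : H, 0 ≤ ⟪A x, x⟫)
    (m : ℕ) (σ τ r : ℝ) (hσ : 1/2 ≤ σ) (hτ : 0 < τ) (hr : 0 ≤ r)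
    (a lam : Fin m → ℝ) (ha : ∀ k, 0 < a k) (hlam : ∀ k, 0 < lam k)
    (y : ℕ → H) (w : Fin m → ℕ → H)
    (heq : ∀ n, (1 + r + ∑ k, a k / lam k) • (τ⁻¹ • (y (n+1) - y n))
        - ∑ k, (a k / lam k) • (τ⁻¹ • (w k (n+1) - w k n))
        + A (σ • y (n+1) + (1 - σ) • y n) = 0)
    (hweq : ∀ k n, τ⁻¹ • (w k (n+1) - w k n)
        + lam k • (σ • w k (n+1) + (1 - σ) • w k n)
        - τ⁻¹ • (y (n+1) - y n) = 0)
    (hw0 : ∀ k, w k 0 = 0) :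
    ∀ n : ℕ, ⟪A (y (n+1)), y (n+1)⟫ + ∑ k, a k * ‖w k (n+1)‖^2
      ≤ ⟪A (y 0), y 0⟫ := by
  intro n
  induction n with
  | zero =>
    have h := two_level_step A hAsym hApos m σ τ r hσ hτ hr a lam ha hlam y w heq hweq 0
    simpa [hw0] using h
  | succ n ih =>
    have h := two_level_step A hAsym hApos m σ τ r hσ hτ hr a lam ha hlam y w heq hweq (n+1)
    exact le_trans h ih
end
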